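/- arXiv:2309.01610 — 6 statements merged into one kernel-verified Lean document; each statement's English description precedes it below -/
import Mathlib

section
/- Suppose a deterministic top-k set S of candidates satisfies δ(S) = 0, i.e., nRel(A ∩ S)/nRel(A) = nRel(B ∩ S)/nRel(B), and suppose that S consists of the top k_A candidates of group A (by relevance probability) and the top k_B candidates of group B, with k_A + k_B = k, so that nRel(A ∩ S)/k_A ≥ nRel(A)/|A| and nRel(B ∩ S)/k_B ≥ nRel(B)/|B|. Then nRel(A ∩ S)/nRel(A) ≥ k/n where n = |A| + |B|. Consequently the group costs 1 - nRel(g ∩ S)/nRel(g) for g ∈ {A,B} and the total cost 1 - (nRel(A∩S)+nRel(B∩S))/(nRel(A)+nRel(B)) are all at most 1 - k/n, the expected cost of the uniform lottery. -/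
/-- If a top-k set S has δ(S) = 0 and consists of the top k_A
candidates of A and top k_B candidates of B (so the selected averages exceed
the group averages), then the selected relevance proportion is at least k/n,
and hence all group costs and the total cost are at most 1 - k/n, the expected
cost of the uniform lottery. -/
theorem stmt_2 {ι : Type*} [DecidableEq ι] (A B S : Finset ι) (p : ι → ℝ)
    (hdisj : Disjoint A B)
    (hp : ∀ i, 0 ≤ p i ∧ p i ≤ 1)
    (hA : 0 < ∑ i ∈ A, p i) (hB : 0 < ∑ i ∈ B, p i)
    (kA kB k n : ℕ)
    (hkA : kA = (A ∩ S).card) (hkB : kB = (B ∩ S).card)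
    (hkA1 : 1 ≤ kA) (hkB1 : 1 ≤ kB) (hk : k = kA + kB)
    (hn : n = A.card + B.card)
    (hδ : (∑ i ∈ A ∩ S, p i) / (∑ i ∈ A, p i)
        = (∑ i ∈ B ∩ S, p i) / (∑ i ∈ B, p i))
    (havgA : (∑ i ∈ A ∩ S, p i) / (kA : ℝ) ≥ (∑ i ∈ A, p i) / (A.card : ℝ))
    (havgB : (∑ i ∈ B ∩ S, p i) / (kB : ℝ) ≥ (∑ i ∈ B, p i) / (B.card : ℝ)) :
    (∑ i ∈ A ∩ S, p i) / (∑ i ∈ A, p i) ≥ (k : ℝ) / (n : ℝ)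
    ∧ 1 - (∑ i ∈ A ∩ S, p i) / (∑ i ∈ A, p i) ≤ 1 - (k : ℝ) / (n : ℝ)
    ∧ 1 - (∑ i ∈ B ∩ S, p i) / (∑ i ∈ B, p i) ≤ 1 - (k : ℝ) / (n : ℝ)
    ∧ 1 - ((∑ i ∈ A ∩ S, p i) + (∑ i ∈ B ∩ S, p i))
            / ((∑ i ∈ A, p i) + (∑ i ∈ B, p i)) ≤ 1 - (k : ℝ) / (n : ℝ) := by
  set a := ∑ i ∈ A ∩ S, p i with ha
  set b := ∑ i ∈ B ∩ S, p i with hb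
  set RA := ∑ i ∈ A, p i with hRA
  set RB := ∑ i ∈ B, p i with hRB
  have hAc : (0:ℝ) < A.card := by
    have h1 : (A ∩ S).card ≤ A.card := Finset.card_le_card Finset.inter_subset_left
    have : 1 ≤ A.card := le_trans (hkA ▸ hkA1) h1
    exact_mod_cast Nat.lt_of_lt_of_le Nat.zero_lt_one this
  have hBc : (0:ℝ) < B.card := by
    have h1 : (B ∩ S).card ≤ B.card := Finset.card_le_card Finset.inter_subset_left
    have : 1 ≤ B.card := le_trans (hkB ▸ hkB1) h1
    exact_mod_cast Nat.lt_of_lt_of_le Nat.zero_lt_one this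
  have hkAp : (0:ℝ) < kA := by exact_mod_cast hkA1
  have hkBp : (0:ℝ) < kB := by exact_mod_cast hkB1
  have hnp : (0:ℝ) < n := by
    rw [hn]; push_cast; linarith
  have h1 : RA * kA ≤ a * A.card := by
    rw [ge_iff_le, div_le_div_iff₀ hAc hkAp] at havgA; linarith
  have h2 : RB * kB ≤ b * B.card := by
    rw [ge_iff_le, div_le_div_iff₀ hBc hkBp] at havgB; linarith
  have hrA : (kA:ℝ) ≤ a / RA * A.card := by
    rw [div_mul_eq_mul_div, le_div_iff₀ hA]; nlinarith
  have hrB : (kB:ℝ) ≤ a / RA * B.card := by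
    rw [hδ, div_mul_eq_mul_div, le_div_iff₀ hB]; nlinarith
  have hmain : (k:ℝ) / n ≤ a / RA := by
    rw [div_le_iff₀ hnp]
    have : ((k:ℝ)) = (kA:ℝ) + kB := by rw [hk]; push_cast; ring
    have hn' : ((n:ℝ)) = (A.card:ℝ) + B.card := by rw [hn]; push_cast; ring
    rw [this, hn']
    calc (kA:ℝ) + kB ≤ a / RA * A.card + a / RA * B.card := add_le_add hrA hrB
      _ = a / RA * ((A.card:ℝ) + B.card) := by ring
  have hbeq : b = a / RA * RB := by
    field_simp at hδ ⊢
    linarith [hδ]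
  have htot : (a + b) / (RA + RB) = a / RA := by
    rw [hbeq]
    field_simp
  refine ⟨hmain, by linarith, ?_, ?_⟩
  · rw [← hδ]; linarith
  · rw [htot]; linarith
end

section
/- With λ_{A,B}, λ_{B,A}, λ_k as in the dual construction, and for a candidate i ∈ A with p_i ≤ p_A (so q_i = p_i/nRel(A) ≤ q_A), the quantity p_i/(nRel(A)+nRel(B)) - λ_k - q_i(λ_{A,B} - λ_{B,A}) is ≤ 0; hence the clipped dual variable λ'_i = [p_i/(nRel(A)+nRel(B)) - λ_k - q_i(λ_{A,B} - λ_{B,A})]_+ equals 0. Conversely, if p_i ≥ p_A then that quantity is ≥ 0. -/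
/-- With the constructed dual variables, for a candidate i ∈ A
with p_i ≤ p_A the slack p_i/(nRel(A)+nRel(B)) - λ_k - q_i(λ_{A,B} - λ_{B,A})
is ≤ 0, hence the clipped dual variable λ'_i = [slack]_+ equals 0;
conversely if p_i ≥ p_A the slack is ≥ 0. -/
theorem stmt_5 (pA pB nA nB : ℝ)
    (hpA : 0 < pA) (hpA1 : pA ≤ 1) (hpB : 0 < pB) (hpB1 : pB ≤ 1)
    (hnA : 0 < nA) (hnB : 0 < nB)
    (qA qB lAB lBA lk : ℝ)
    (hqA : qA = pA / nA) (hqB : qB = pB / nB)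
    (hlAB : lAB = max ((pA - pB) / (qA + qB)) 0 / (nA + nB))
    (hlBA : lBA = max (-((pA - pB) / (qA + qB))) 0 / (nA + nB))
    (hlk : lk = pA / (nA + nB) - qA * (lAB - lBA))
    (pi qi : ℝ) (hpi0 : 0 ≤ pi) (hpi1 : pi ≤ 1) (hqi : qi = pi / nA) :
    (pi ≤ pA →
      pi / (nA + nB) - lk - qi * (lAB - lBA) ≤ 0
      ∧ max (pi / (nA + nB) - lk - qi * (lAB - lBA)) 0 = 0)
    ∧ (pA ≤ pi → 0 ≤ pi / (nA + nB) - lk - qi * (lAB - lBA)) := by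
  have hn : (0:ℝ) < nA + nB := by linarith
  have hq : 0 < qA + qB := by
    rw [hqA, hqB]; positivity
  have hdiff : lAB - lBA = ((pA - pB) / (qA + qB)) / (nA + nB) := by
    rw [hlAB, hlBA, div_sub_div_same, max_zero_sub_max_neg_zero_eq_self]
  set c : ℝ := ((pA - pB) / (qA + qB)) / (nA + nB) with hc
  have hslack : pi / (nA + nB) - lk - qi * (lAB - lBA)
      = (pi - pA) * (1 / (nA + nB) - c / nA) := by
    rw [hdiff, hlk, hdiff, hqA, hqi]
    field_simp
    ring
  have hkey : 0 ≤ 1 / (nA + nB) - c / nA := by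
    have hc' : c / nA ≤ 1 / (nA + nB) := by
      rw [hc]
      rw [div_div, div_div]
      rw [div_le_div_iff₀ (by positivity) hn]
      have hqb : qA + qB ≥ pA / nA := by
        have : 0 < qB := by rw [hqB]; positivity
        rw [hqA]; linarith
      have h1 : (qA + qB) * nA ≥ pA := by
        have := (div_le_iff₀ hnA).mp hqb
        linarith [mul_comm (qA + qB) nA]
      nlinarith
    linarith
  constructor
  · intro h
    have h1 : pi / (nA + nB) - lk - qi * (lAB - lBA) ≤ 0 := by
      rw [hslack]
      exact mul_nonpos_of_nonpos_of_nonneg (by linarith) hkey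
    exact ⟨h1, max_eq_right h1⟩
  · intro h
    rw [hslack]
    exact mul_nonneg (by linarith) hkey
end

section
/- Suppose a feasible integer solution X (the EOR solution selecting the top k_A candidates of A and top k_B of B, k_A + k_B = k) satisfies |Σ_{i=1}^{k_A} q_i - Σ_{j=1}^{k_B} q_j| ≤ δ, where q_i = p_i/nRel(A) for selected i ∈ A and q_j = p_j/nRel(B) for selected j ∈ B, and suppose the constructed dual variables (λ_{A,B}, λ_{B,A}, λ_k, λ') are feasible for the dual LP with λ'_i = 0 for unselected candidates. Then the duality gap g(λ) - f(X) satisfies g(λ) - f(X) ≤ 2δ·max(λ_{A,B}, λ_{B,A}) = (2δ/(nRel(A)+nRel(B)))·|p_A - p_B|/(q_A + q_B). Hence the EOR solution is within this additive gap of the LP (and ILP) optimum. -/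
/-- Duality gap bound for the two-group EOR solution. If the
selected set S (top candidates of each group) satisfies |S_A - S_B| ≤ δ and
the dual variables are constructed from the EOR solution (with λ'_i = 0 for
unselected candidates and equal to the slack for selected ones), then the
duality gap g(λ) - f(X) is at most 2δ·max(λ_{A,B}, λ_{B,A})
= (2δ/(nRel(A)+nRel(B)))·|p_A - p_B|/(q_A + q_B). -/
theorem stmt_7 {ι : Type*} [Fintype ι] [DecidableEq ι] (A B : Finset ι)
    (hpart : A ∪ B = Finset.univ) (hdisj : Disjoint A B)
    (p : ι → ℝ) (hp : ∀ i, 0 ≤ p i ∧ p i ≤ 1)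
    (nA nB N : ℝ) (hnA : nA = ∑ i ∈ A, p i) (hnB : nB = ∑ i ∈ B, p i)
    (hnApos : 0 < nA) (hnBpos : 0 < nB) (hN : N = nA + nB)
    (S : Finset ι) (k : ℕ) (hk : k = S.card)
    (δ pA pB qA qB lAB lBA lk : ℝ) (hδ : 0 ≤ δ)
    (hpApos : 0 < pA) (hpBpos : 0 < pB)
    (hqA : qA = pA / nA) (hqB : qB = pB / nB)
    (hlAB : lAB = max ((pA - pB) / (qA + qB)) 0 / N)
    (hlBA : lBA = max (-((pA - pB) / (qA + qB))) 0 / N)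
    (hlk : lk = pA / N - qA * (lAB - lBA))
    (l' : ι → ℝ)
    (hl' : ∀ i, l' i = if i ∈ S then
        (if i ∈ A then p i / N - lk - (p i / nA) * (lAB - lBA)
         else p i / N - lk - (p i / nB) * (lBA - lAB))
      else 0)
    (SA SB : ℝ)
    (hSA : SA = ∑ i ∈ A ∩ S, p i / nA) (hSB : SB = ∑ i ∈ B ∩ S, p i / nB)
    (hgap : |SA - SB| ≤ δ)
    (f g : ℝ)
    (hf : f = (∑ i ∈ S, p i) / N)
    (hg : g = δ * (lAB + lBA) + (k : ℝ) * lk + ∑ i, l' i) :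
    g - f ≤ 2 * δ * max lAB lBA
    ∧ 2 * δ * max lAB lBA = (2 * δ / N) * (|pA - pB| / (qA + qB)) := by
  have hNpos : 0 < N := by rw [hN]; linarith
  have hqpos : 0 < qA + qB := by
    rw [hqA, hqB]; positivity
  set x : ℝ := (pA - pB) / (qA + qB) with hx
  have habs : |x| = |pA - pB| / (qA + qB) := by
    rw [hx, abs_div, abs_of_pos hqpos]
  -- key identities about lAB, lBA
  have hsumLB : lAB + lBA = |x| / N := by
    rw [hlAB, hlBA, ← add_div]
    rcases le_total 0 x with h | h
    · rw [max_eq_right (by linarith : -x ≤ 0), max_eq_left h, abs_of_nonneg h]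
      ring_nf
    · rw [max_eq_right h, max_eq_left (by linarith : 0 ≤ -x), abs_of_nonpos h]
      ring_nf
  have hdiff : lAB - lBA = x / N := by
    rw [hlAB, hlBA, div_sub_div_same]
    rcases le_total 0 x with h | h
    · rw [max_eq_right (by linarith : -x ≤ 0), max_eq_left h]; ring_nf
    · rw [max_eq_right h, max_eq_left (by linarith : 0 ≤ -x)]; ring_nf
  have hmax : max lAB lBA = |x| / N := by
    rw [hlAB, hlBA]
    rcases le_total 0 x with h | h
    · rw [max_eq_right (by linarith : -x ≤ 0), max_eq_left h, abs_of_nonneg h,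
        zero_div, max_eq_left (div_nonneg h hNpos.le)]
    · rw [max_eq_right h, max_eq_left (by linarith : 0 ≤ -x), abs_of_nonpos h,
        zero_div, max_eq_right (div_nonneg (by linarith) hNpos.le)]
  -- evaluate the sum of l'
  have hsum1 : ∑ i, l' i = ∑ i ∈ S, l' i := by
    refine (Finset.sum_subset (Finset.subset_univ S) ?_).symm
    intro i _ hi
    rw [hl' i, if_neg hi]
  have hSU : S ∩ A ∪ S ∩ B = S := by
    rw [← Finset.inter_union_distrib_left, hpart, Finset.inter_univ]
  have hSdisj : Disjoint (S ∩ A) (S ∩ B) :=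
    hdisj.mono Finset.inter_subset_right Finset.inter_subset_right
  have hAeval : ∑ i ∈ S ∩ A, l' i
      = (∑ i ∈ S ∩ A, p i) / N - ((S ∩ A).card : ℝ) * lk - SA * (lAB - lBA) := by
    have h1 : ∑ i ∈ S ∩ A, l' i
        = ∑ i ∈ S ∩ A, (p i / N - lk - (p i / nA) * (lAB - lBA)) := by
      refine Finset.sum_congr rfl fun i hi => ?_
      obtain ⟨h1, h2⟩ := Finset.mem_inter.mp hi
      rw [hl' i, if_pos h1, if_pos h2]
    rw [h1, Finset.sum_sub_distrib, Finset.sum_sub_distrib, Finset.sum_const,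
      ← Finset.sum_div, ← Finset.sum_mul, nsmul_eq_mul, hSA, Finset.inter_comm A S]
  have hBeval : ∑ i ∈ S ∩ B, l' i
      = (∑ i ∈ S ∩ B, p i) / N - ((S ∩ B).card : ℝ) * lk + SB * (lAB - lBA) := by
    have h1 : ∑ i ∈ S ∩ B, l' i
        = ∑ i ∈ S ∩ B, (p i / N - lk - (p i / nB) * (lBA - lAB)) := by
      refine Finset.sum_congr rfl fun i hi => ?_
      obtain ⟨h1, h2⟩ := Finset.mem_inter.mp hi
      rw [hl' i, if_pos h1, if_neg (Finset.disjoint_right.mp hdisj h2)]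
    rw [h1, Finset.sum_sub_distrib, Finset.sum_sub_distrib, Finset.sum_const,
      ← Finset.sum_div, ← Finset.sum_mul, nsmul_eq_mul, hSB, Finset.inter_comm B S]
    ring
  have hcard : (k : ℝ) = ((S ∩ A).card : ℝ) + ((S ∩ B).card : ℝ) := by
    have h : (S ∩ A).card + (S ∩ B).card = S.card := by
      rw [← Finset.card_union_of_disjoint hSdisj, hSU]
    rw [hk, ← h]
    push_cast
    ring
  have hfsplit : ∑ i ∈ S, p i = (∑ i ∈ S ∩ A, p i) + (∑ i ∈ S ∩ B, p i) := by
    rw [← Finset.sum_union hSdisj, hSU]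
  have hlsplit : ∑ i ∈ S, l' i = (∑ i ∈ S ∩ A, l' i) + (∑ i ∈ S ∩ B, l' i) := by
    rw [← Finset.sum_union hSdisj, hSU]
  have hgap2 : g - f = δ * (lAB + lBA) - (SA - SB) * (lAB - lBA) := by
    rw [hg, hf, hsum1, hlsplit, hAeval, hBeval, hcard, hfsplit]
    ring
  constructor
  · rw [hgap2, hsumLB, hdiff, hmax]
    have h1 : -((SA - SB) * (x / N)) ≤ |SA - SB| * (|x| / N) := by
      calc -((SA - SB) * (x / N)) ≤ |(SA - SB) * (x / N)| := neg_le_abs _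
        _ = |SA - SB| * (|x| / N) := by
            rw [abs_mul, abs_div, abs_of_pos hNpos]
    have h2 : |SA - SB| * (|x| / N) ≤ δ * (|x| / N) :=
      mul_le_mul_of_nonneg_right hgap (by positivity)
    linarith
  · rw [hmax, habs]
    ring
end

section
/- Let a_1 ≥ a_2 ≥ ... (nonnegative reals summing to 1) and b_1 ≥ b_2 ≥ ... (nonnegative reals summing to 1) be the normalized relevance sequences of groups A and B (a_i = p_i^A/nRel(A), b_j = p_j^B/nRel(B)). Define the greedy merge: start with partial sums S_A = S_B = 0; at each step, append the next element from the group that minimizes |(S_A + next_a) - S_B| versus |S_A - (S_B + next_b)| (taking the remaining group if one is exhausted). Then at every step k the partial sums satisfy |S_A - S_B| ≤ (a_1 + b_1)/2. -/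
/-- The greedy EOR merge of two sequences of normalized relevances: at each
step, append the next element of the group that minimizes the absolute
discrepancy of the partial sums; record the trace of partial sums (S_A, S_B). -/
noncomputable def greedyTrace : List ℝ → List ℝ → ℝ → ℝ → List (ℝ × ℝ)
  | [], [], _, _ => []
  | a :: as, [], sA, sB => (sA + a, sB) :: greedyTrace as [] (sA + a) sB
  | [], b :: bs, sA, sB => (sA, sB + b) :: greedyTrace [] bs sA (sB + b)
  | a :: as, b :: bs, sA, sB =>
    if |sA + a - sB| ≤ |sA - (sB + b)| then
      (sA + a, sB) :: greedyTrace as (b :: bs) (sA + a) sB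
    else
      (sA, sB + b) :: greedyTrace (a :: as) bs sA (sB + b)
  termination_by a b _ _ => a.length + b.length

lemma greedy_aux (A1 B1 : ℝ) :
    ∀ n (a b : List ℝ) (sA sB : ℝ), a.length + b.length ≤ n →
    (∀ x ∈ a, 0 ≤ x ∧ x ≤ A1) → (∀ x ∈ b, 0 ≤ x ∧ x ≤ B1) →
    sA + a.sum = 1 → sB + b.sum = 1 → |sA - sB| ≤ (A1 + B1) / 2 →
    ∀ s ∈ greedyTrace a b sA sB, |s.1 - s.2| ≤ (A1 + B1) / 2 := by
  intro n
  induction n with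
  | zero =>
    intro a b sA sB hlen ha hb hsa hsb hd s hs
    obtain rfl : a = [] := List.length_eq_zero_iff.mp (by omega)
    obtain rfl : b = [] := List.length_eq_zero_iff.mp (by omega)
    simp [greedyTrace] at hs
  | succ n ih =>
    intro a b sA sB hlen ha hb hsa hsb hd s hs
    match a, b with
    | [], [] => simp [greedyTrace] at hs
    | a0 :: as, [] =>
      have hsB : sB = 1 := by simpa using hsb
      have h0 : 0 ≤ a0 := (ha a0 (List.mem_cons_self)).1
      have hsum : 0 ≤ as.sum := List.sum_nonneg fun x hx => (ha x (List.mem_cons_of_mem _ hx)).1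
      have hsa' : (sA + a0) + as.sum = 1 := by
        simp [List.sum_cons] at hsa; linarith
      have hd' : |sA + a0 - sB| ≤ (A1 + B1) / 2 := by
        rcases abs_le.mp hd with ⟨h1, h2⟩
        rw [abs_le]
        constructor <;> nlinarith
      rw [greedyTrace] at hs
      rcases List.mem_cons.mp hs with hs | hs
      · simpa [hs] using hd'
      · exact ih as [] (sA + a0) sB (by simp at hlen ⊢; omega)
          (fun x hx => ha x (List.mem_cons_of_mem _ hx)) (by simp)
          hsa' hsb hd' s hs
    | [], b0 :: bs =>
      have hsA : sA = 1 := by simpa using hsa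
      have h0 : 0 ≤ b0 := (hb b0 (List.mem_cons_self)).1
      have hsum : 0 ≤ bs.sum := List.sum_nonneg fun x hx => (hb x (List.mem_cons_of_mem _ hx)).1
      have hsb' : (sB + b0) + bs.sum = 1 := by
        simp [List.sum_cons] at hsb; linarith
      have hd' : |sA - (sB + b0)| ≤ (A1 + B1) / 2 := by
        rcases abs_le.mp hd with ⟨h1, h2⟩
        rw [abs_le]
        constructor <;> nlinarith
      rw [greedyTrace] at hs
      rcases List.mem_cons.mp hs with hs | hs
      · simpa [hs] using hd'
      · exact ih [] bs sA (sB + b0) (by simp at hlen ⊢; omega) (by simp)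
          (fun x hx => hb x (List.mem_cons_of_mem _ hx)) hsa hsb' hd' s hs
    | a0 :: as, b0 :: bs =>
      obtain ⟨ha0, haA⟩ := ha a0 (List.mem_cons_self)
      obtain ⟨hb0, hbB⟩ := hb b0 (List.mem_cons_self)
      rcases abs_le.mp hd with ⟨h1, h2⟩
      rw [greedyTrace] at hs
      split_ifs at hs with h
      · have hd' : |sA + a0 - sB| ≤ (A1 + B1) / 2 := by
          rcases abs_cases (sA + a0 - sB) with ⟨e1, p1⟩ | ⟨e1, p1⟩ <;>
            rcases abs_cases (sA - (sB + b0)) with ⟨e2, p2⟩ | ⟨e2, p2⟩ <;>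
            rw [e1] <;> rw [e1, e2] at h <;> linarith
        have hsa' : (sA + a0) + as.sum = 1 := by
          simp [List.sum_cons] at hsa; linarith
        rcases List.mem_cons.mp hs with hs | hs
        · simpa [hs] using hd'
        · exact ih as (b0 :: bs) (sA + a0) sB (by simp at hlen ⊢; omega)
            (fun x hx => ha x (List.mem_cons_of_mem _ hx)) hb hsa' hsb hd' s hs
      · rw [not_le] at h
        have hd' : |sA - (sB + b0)| ≤ (A1 + B1) / 2 := by
          rcases abs_cases (sA - (sB + b0)) with ⟨e1, p1⟩ | ⟨e1, p1⟩ <;>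
            rcases abs_cases (sA + a0 - sB) with ⟨e2, p2⟩ | ⟨e2, p2⟩ <;>
            rw [e1] <;> rw [e1, e2] at h <;> linarith
        have hsb' : (sB + b0) + bs.sum = 1 := by
          simp [List.sum_cons] at hsb; linarith
        rcases List.mem_cons.mp hs with hs | hs
        · simpa [hs] using hd'
        · exact ih (a0 :: as) bs sA (sB + b0) (by simp at hlen ⊢; omega) ha
            (fun x hx => hb x (List.mem_cons_of_mem _ hx)) hsa hsb' hd' s hs

/-- For nonincreasing nonnegative sequences a, b each summing
to 1, every prefix of the greedy merge satisfies
|S_A - S_B| ≤ (a₁ + b₁)/2. -/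
theorem stmt_8 (a b : List ℝ)
    (ha : a.Pairwise (· ≥ ·)) (hb : b.Pairwise (· ≥ ·))
    (ha0 : ∀ x ∈ a, 0 ≤ x) (hb0 : ∀ x ∈ b, 0 ≤ x)
    (hsa : a.sum = 1) (hsb : b.sum = 1) :
    ∀ s ∈ greedyTrace a b 0 0, |s.1 - s.2| ≤ (a.headD 0 + b.headD 0) / 2 := by
  match a, b with
  | [], _ => simp at hsa
  | _ :: _, [] => simp at hsb
  | a0 :: as, b0 :: bs =>
    have ha' : ∀ x ∈ a0 :: as, 0 ≤ x ∧ x ≤ a0 := by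
      intro x hx
      refine ⟨ha0 x hx, ?_⟩
      rcases List.mem_cons.mp hx with rfl | hx
      · exact le_refl x
      · exact (List.pairwise_cons.mp ha).1 x hx
    have hb' : ∀ x ∈ b0 :: bs, 0 ≤ x ∧ x ≤ b0 := by
      intro x hx
      refine ⟨hb0 x hx, ?_⟩
      rcases List.mem_cons.mp hx with rfl | hx
      · exact le_refl x
      · exact (List.pairwise_cons.mp hb).1 x hx
    simpa using greedy_aux a0 b0 ((a0 :: as).length + (b0 :: bs).length)
      (a0 :: as) (b0 :: bs) 0 0 le_rfl ha' hb' (by simpa using hsa) (by simpa using hsb)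
      (by
        simp only [sub_zero, abs_zero]
        have h1 := ha0 a0 (List.mem_cons_self)
        have h2 := hb0 b0 (List.mem_cons_self)
        linarith)
end

section
/- For G groups with normalized nonincreasing relevance sequences (each group's fractions sum to 1), define the greedy rule: at each step append the top remaining element of the group that minimizes δ(σ) = max_g F_g - min_g F_g, where F_g is the cumulative fraction of group g selected. Then at every step k, δ(σ_k) ≤ δ_max := max_g f_g(1), where f_g(1) is the largest relevance fraction of group g. Specifically: if at step k-1 the bound holds and the group with minimal F selects its next element, making its F exceed the previous maximum, then the new gap is at most its added fraction, which is ≤ δ_max. -/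
lemma stmt12_key {G : ℕ} (hne : (Finset.univ : Finset (Fin G)).Nonempty)
    (Fv : Fin G → ℝ) (g0 : Fin G) (a : ℝ)
    (hmin : ∀ g, Fv g0 ≤ Fv g) (ha : 0 ≤ a) :
    Finset.univ.sup' hne (Function.update Fv g0 (Fv g0 + a))
      - Finset.univ.inf' hne (Function.update Fv g0 (Fv g0 + a))
      ≤ max (Finset.univ.sup' hne Fv - Finset.univ.inf' hne Fv) a := by
  set m := Fv g0 with hm
  have hsup : Finset.univ.sup' hne (Function.update Fv g0 (m + a))
      ≤ m + max (Finset.univ.sup' hne Fv - m) a := by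
    apply Finset.sup'_le
    intro g _
    by_cases hg : g = g0
    · subst hg
      simp only [Function.update_self]
      have := le_max_right (Finset.univ.sup' hne Fv - m) a
      linarith
    · rw [Function.update_of_ne hg]
      have : Fv g ≤ Finset.univ.sup' hne Fv := Finset.le_sup' Fv (Finset.mem_univ g)
      have h2 : Finset.univ.sup' hne Fv - m ≤ max (Finset.univ.sup' hne Fv - m) a :=
        le_max_left _ _
      linarith
  have hinf : m ≤ Finset.univ.inf' hne (Function.update Fv g0 (m + a)) := by
    apply Finset.le_inf'
    intro g _
    by_cases hg : g = g0
    · subst hg; simp [Function.update_self]; linarith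
    · rw [Function.update_of_ne hg]; exact hmin g
  have hinfFv : Finset.univ.inf' hne Fv = m :=
    le_antisymm (Finset.inf'_le _ (Finset.mem_univ g0))
      (Finset.le_inf' _ _ fun g _ => hmin g)
  rw [hinfFv]
  linarith

/-- Multi-group greedy merge invariant. For G groups, each with
a nonincreasing sequence of nonnegative fractions summing to 1, the greedy
rule (append the top remaining element of a group minimizing the resulting
gap δ = max_g F_g - min_g F_g) maintains δ(σ_k) ≤ δ_max = max_g f_g(1) at
every step k. The second conjunct is the key inductive step: if the group
with minimal F adds a fraction a ≤ δ_max so that its F exceeds the previous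
maximum, then the new gap is at most a. -/
theorem stmt_12 {G : ℕ} (hG : 0 < G) (L : Fin G → List ℝ)
    (hsorted : ∀ g, (L g).Pairwise (· ≥ ·))
    (hnonneg : ∀ g, ∀ x ∈ L g, 0 ≤ x)
    (hsum : ∀ g, (L g).sum = 1)
    (hne : (Finset.univ : Finset (Fin G)).Nonempty)
    (F : (Fin G → ℕ) → Fin G → ℝ)
    (hF : ∀ cnt g, F cnt g = ((L g).take (cnt g)).sum)
    (gap : (Fin G → ℕ) → ℝ)
    (hgap : ∀ cnt, gap cnt
      = Finset.univ.sup' hne (F cnt) - Finset.univ.inf' hne (F cnt))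
    (δmax : ℝ) (hδmax : δmax = Finset.univ.sup' hne (fun g => (L g).headD 0))
    (c : ℕ → Fin G → ℕ)
    (hc0 : ∀ g, c 0 g = 0)
    (hbound : ∀ k g, c k g ≤ (L g).length)
    (hstep : ∀ k, (∃ g, c k g < (L g).length) →
        ∃ g, c k g < (L g).length
          ∧ c (k + 1) = Function.update (c k) g (c k g + 1))
    (hstop : ∀ k, (¬ ∃ g, c k g < (L g).length) → c (k + 1) = c k)
    (hgreedy : ∀ k g', c k g' < (L g').length →
        gap (c (k + 1)) ≤ gap (Function.update (c k) g' (c k g' + 1))) :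
    (∀ k, gap (c k) ≤ δmax)
    ∧ (∀ (Fv : Fin G → ℝ) (g0 : Fin G) (a : ℝ),
        (∀ g, Fv g0 ≤ Fv g) →
        Finset.univ.sup' hne Fv - Finset.univ.inf' hne Fv ≤ δmax →
        0 ≤ a → a ≤ δmax →
        (∀ g, Fv g ≤ Fv g0 + a) →
        Finset.univ.sup' hne (Function.update Fv g0 (Fv g0 + a))
          - Finset.univ.inf' hne (Function.update Fv g0 (Fv g0 + a)) ≤ a) := by
  -- basic facts
  have hnil : ∀ g, L g ≠ [] := by
    intro g h
    have := hsum g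
    rw [h] at this
    simp at this
  have hhead0 : ∀ g, 0 ≤ (L g).headD 0 := by
    intro g
    cases h : L g with
    | nil => simp
    | cons x t =>
      simp only [List.headD_cons]
      exact hnonneg g x (by rw [h]; exact List.mem_cons_self)
  have hδ0 : 0 ≤ δmax := by
    obtain ⟨g, hg⟩ := hne
    rw [hδmax]
    exact le_trans (hhead0 g) (Finset.le_sup' (fun g => (L g).headD 0) (Finset.mem_univ g))
  have hpartial : ∀ g n, ((L g).take n).sum ≤ 1 := by
    intro g n
    have hsplit : ((L g).take n).sum + ((L g).drop n).sum = (L g).sum := by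
      rw [← List.sum_append, List.take_append_drop]
    have hdrop : 0 ≤ ((L g).drop n).sum := by
      apply List.sum_nonneg
      intro x hx
      exact hnonneg g x (List.mem_of_mem_drop hx)
    rw [hsum g] at hsplit
    linarith
  have hget_le_head : ∀ g (n : ℕ) (h : n < (L g).length),
      (L g).get ⟨n, h⟩ ≤ (L g).headD 0 := by
    intro g n h
    have h0 : 0 < (L g).length := lt_of_le_of_lt (Nat.zero_le n) h
    have := (hsorted g).rel_get_of_le (a := ⟨0, h0⟩) (b := ⟨n, h⟩) (by simp [Fin.le_def])
    have hh : (L g).headD 0 = (L g).get ⟨0, h0⟩ := by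
      rcases List.exists_cons_of_ne_nil (hnil g) with ⟨x, t, hx⟩
      have : (L g).get ⟨0, h0⟩ = x := by simp [hx]
      rw [this, hx]
      rfl
    rw [hh]
    exact this
  constructor
  · intro k
    induction k with
    | zero =>
      rw [hgap]
      have hFv : F (c 0) = fun _ => (0 : ℝ) := by
        funext g
        rw [hF, hc0]
        simp
      rw [hFv]
      simp [hδ0]
    | succ k ih =>
      by_cases h : ∃ g, c k g < (L g).length
      · -- choose remaining group with minimal F
        set Fv := F (c k) with hFv
        obtain ⟨g1, hg1⟩ := h
        have hSne : (Finset.univ.filter (fun g => c k g < (L g).length)).Nonempty :=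
          ⟨g1, by simp [hg1]⟩
        obtain ⟨g', hg'mem, hg'min⟩ := Finset.exists_min_image _ Fv hSne
        rw [Finset.mem_filter] at hg'mem
        have hg' : c k g' < (L g').length := hg'mem.2
        have hmin : ∀ g, Fv g' ≤ Fv g := by
          intro g
          by_cases hgin : c k g < (L g).length
          · exact hg'min g (by simp [hgin])
          · have hlen : c k g = (L g).length := le_antisymm (hbound k g) (not_lt.mp hgin)
            have : Fv g = 1 := by
              rw [hFv, hF, hlen, List.take_length, hsum]
            rw [this, hFv, hF]
            exact hpartial g' _
        set a := (L g').get ⟨c k g', hg'⟩ with ha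
        have ha0 : 0 ≤ a := hnonneg g' _ (List.get_mem _ _)
        have haδ : a ≤ δmax := by
          rw [hδmax]
          exact le_trans (hget_le_head g' _ hg')
            (Finset.le_sup' (fun g => (L g).headD 0) (Finset.mem_univ g'))
        have hFupd : F (Function.update (c k) g' (c k g' + 1))
            = Function.update Fv g' (Fv g' + a) := by
          funext g
          by_cases hg : g = g'
          · subst hg
            rw [hF, Function.update_self, Function.update_self,
              List.sum_take_succ _ _ hg', hFv, hF, ha]
            simp [List.get_eq_getElem]
          · rw [hF, Function.update_of_ne hg, Function.update_of_ne hg, hFv, hF]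
        have hkey := stmt12_key hne Fv g' a hmin ha0
        calc gap (c (k + 1)) ≤ gap (Function.update (c k) g' (c k g' + 1)) :=
              hgreedy k g' hg'
          _ = Finset.univ.sup' hne (Function.update Fv g' (Fv g' + a))
              - Finset.univ.inf' hne (Function.update Fv g' (Fv g' + a)) := by
              rw [hgap, hFupd]
          _ ≤ max (Finset.univ.sup' hne Fv - Finset.univ.inf' hne Fv) a := hkey
          _ ≤ δmax := by
              apply max_le _ haδ
              rw [hgap] at ih
              exact ih
      · rw [hstop k h]
        exact ih
  · intro Fv g0 a hmin _ ha0 _ hbd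
    have hsup : Finset.univ.sup' hne (Function.update Fv g0 (Fv g0 + a))
        ≤ Fv g0 + a := by
      apply Finset.sup'_le
      intro g _
      by_cases hg : g = g0
      · subst hg; simp
      · rw [Function.update_of_ne hg]; exact hbd g
    have hinf : Fv g0 ≤ Finset.univ.inf' hne (Function.update Fv g0 (Fv g0 + a)) := by
      apply Finset.le_inf'
      intro g _
      by_cases hg : g = g0
      · subst hg; simp [ha0]
      · rw [Function.update_of_ne hg]; exact hmin g
    linarith
end

section
/- For the multi-group LP with G(G−1) pairwise EOR constraints, the duality gap decomposes pairwise: for the EOR feasible solution X selecting k_g top elements from each group g, g(λ) − f(X) = Σ_{{A,B}} [δ(λ_{A,B} + λ_{B,A}) − (S_A − S_B)(λ_{A,B} − λ_{B,A})], where S_g = Σ_{i=1}^{k_g} q_i is the selected normalized relevance of group g; and if |S_A − S_B| ≤ δ for all pairs, this gap is at most (2δ/((G−1)N))·Σ_{{A,B}} |p_A − p_B|/(q_A + q_B), the sum over all unordered pairs of groups. -/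
lemma swap_pairs {Γ : Type*} [Fintype Γ] [DecidableEq Γ] (F : Γ → Γ → ℝ) :
    ∑ A, ∑ B ∈ Finset.univ.erase A, F A B
      = ∑ A, ∑ B ∈ Finset.univ.erase A, F B A := by
  exact Finset.sum_comm' (fun x y => by simp [Finset.mem_erase]; tauto)

lemma sym_id {Γ : Type*} [Fintype Γ] [DecidableEq Γ]
    (lam : Γ → Γ → ℝ) (Ssel : Γ → ℝ) (δ : ℝ) :
    δ * (∑ A, ∑ B ∈ Finset.univ.erase A, lam A B)
      - ∑ A, Ssel A * ∑ B ∈ Finset.univ.erase A, (lam A B - lam B A)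
    = (1 / 2) * ∑ A, ∑ B ∈ Finset.univ.erase A,
        (δ * (lam A B + lam B A) - (Ssel A - Ssel B) * (lam A B - lam B A)) := by
  have hL : δ * (∑ A, ∑ B ∈ Finset.univ.erase A, lam A B)
      - ∑ A, Ssel A * ∑ B ∈ Finset.univ.erase A, (lam A B - lam B A)
      = ∑ A, ∑ B ∈ Finset.univ.erase A,
          (δ * lam A B - Ssel A * (lam A B - lam B A)) := by
    simp only [Finset.mul_sum, mul_sub, Finset.sum_sub_distrib]
  have hpt : ∀ A B : Γ, δ * (lam A B + lam B A) - (Ssel A - Ssel B) * (lam A B - lam B A)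
      = (δ * lam A B - Ssel A * (lam A B - lam B A))
        + (δ * lam B A - Ssel B * (lam B A - lam A B)) := fun A B => by ring
  simp_rw [hpt]
  simp only [Finset.sum_add_distrib]
  have hsw := swap_pairs (fun A B => δ * lam A B - Ssel A * (lam A B - lam B A))
  linarith [hL, hsw]

/-- Multi-group duality gap decomposition. For the EOR feasible
solution X (indicator of the selected set S) and the constructed dual
variables, the duality gap g(λ) - f(X) equals the sum over unordered pairs
{A,B} of δ(λ_{A,B}+λ_{B,A}) - (S_A - S_B)(λ_{A,B} - λ_{B,A}) (written via
half the sum over ordered distinct pairs); and if |S_A - S_B| ≤ δ for all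
pairs, the gap is at most (2δ/((G-1)N))·Σ_{{A,B}} |p_A - p_B|/(q_A + q_B). -/
theorem stmt_14 {ι Γ : Type*} [Fintype ι] [Fintype Γ] [DecidableEq ι] [DecidableEq Γ]
    (grp : ι → Γ) (p : ι → ℝ) (hp : ∀ i, 0 ≤ p i ∧ p i ≤ 1)
    (G : ℕ) (hGcard : G = Fintype.card Γ) (hG : 2 ≤ G)
    (nRel : Γ → ℝ)
    (hnRel : ∀ g, nRel g = ∑ i ∈ Finset.univ.filter (fun i => grp i = g), p i)
    (hnRelpos : ∀ g, 0 < nRel g)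
    (N : ℝ) (hN : N = ∑ g, nRel g)
    (pg : Γ → ℝ) (hpg : ∀ g, 0 < pg g ∧ pg g ≤ 1)
    (q : Γ → ℝ) (hq : ∀ g, q g = pg g / nRel g)
    (lam : Γ → Γ → ℝ)
    (hlam : ∀ A B, lam A B
      = max ((pg A - pg B) / (q A + q B)) 0 / (((G : ℝ) - 1) * N))
    (lk : ℝ)
    (hlk : ∀ A : Γ, lk
      = pg A / N - q A * ∑ g ∈ Finset.univ.erase A, (lam A g - lam g A))
    (S : Finset ι) (k : ℕ) (hk : k = S.card)
    (l' : ι → ℝ)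
    (hl' : ∀ i, l' i = if i ∈ S then
        p i / N - lk - (p i / nRel (grp i))
          * ∑ g ∈ Finset.univ.erase (grp i), (lam (grp i) g - lam g (grp i))
      else 0)
    (Ssel : Γ → ℝ)
    (hSsel : ∀ g, Ssel g = ∑ i ∈ S.filter (fun i => grp i = g), p i / nRel g)
    (δ : ℝ) (hδ : 0 ≤ δ)
    (f gd : ℝ)
    (hf : f = (∑ i ∈ S, p i) / N)
    (hgd : gd = δ * (∑ A, ∑ B ∈ Finset.univ.erase A, lam A B)
              + (k : ℝ) * lk + ∑ i, l' i) :
    gd - f = (1 / 2) * ∑ A, ∑ B ∈ Finset.univ.erase A,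
        (δ * (lam A B + lam B A) - (Ssel A - Ssel B) * (lam A B - lam B A))
    ∧ ((∀ A B : Γ, A ≠ B → |Ssel A - Ssel B| ≤ δ) →
        gd - f ≤ (2 * δ / (((G : ℝ) - 1) * N))
          * ((1 / 2) * ∑ A, ∑ B ∈ Finset.univ.erase A,
              |pg A - pg B| / (q A + q B))) := by
  -- basic positivity facts
  have hΓne : Nonempty Γ := by
    have : 0 < Fintype.card Γ := by omega
    exact Fintype.card_pos_iff.mp this
  have hNpos : 0 < N := by
    rw [hN]
    exact Finset.sum_pos (fun g _ => hnRelpos g) Finset.univ_nonempty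
  have hG1 : (0:ℝ) < (G : ℝ) - 1 := by
    have : (2:ℝ) ≤ (G:ℝ) := by exact_mod_cast hG
    linarith
  have hcpos : 0 < ((G : ℝ) - 1) * N := mul_pos hG1 hNpos
  have hqpos : ∀ g, 0 < q g := fun g => by
    rw [hq]; exact div_pos (hpg g).1 (hnRelpos g)
  have hlnn : ∀ A B, 0 ≤ lam A B := fun A B => by
    rw [hlam]; exact div_nonneg (le_max_right _ _) hcpos.le
  have hsumlam : ∀ A B, lam A B + lam B A
      = (|pg A - pg B| / (q A + q B)) / (((G : ℝ) - 1) * N) := by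
    intro A B
    rw [hlam, hlam, ← add_div]
    congr 1
    have hqAB : 0 < q A + q B := add_pos (hqpos A) (hqpos B)
    have h1 : (pg B - pg A) / (q B + q A) = -((pg A - pg B) / (q A + q B)) := by
      rw [add_comm (q B)]; ring
    rw [h1]
    have h2 : max ((pg A - pg B) / (q A + q B)) 0
        + max (-((pg A - pg B) / (q A + q B))) 0 = |(pg A - pg B) / (q A + q B)| := by
      rcases le_total ((pg A - pg B) / (q A + q B)) 0 with h | h
      · rw [max_eq_right h, max_eq_left (by linarith), abs_of_nonpos h]; ring
      · rw [max_eq_left h, max_eq_right (by linarith), abs_of_nonneg h]; ring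
    rw [h2, abs_div, abs_of_pos hqAB]
  -- the sum of the l' duals
  have hsuml' : ∑ i, l' i = (∑ i ∈ S, p i) / N - (k : ℝ) * lk
      - ∑ A, Ssel A * ∑ g ∈ Finset.univ.erase A, (lam A g - lam g A) := by
    have h1 : ∑ i, l' i = ∑ i ∈ S, (p i / N - lk - (p i / nRel (grp i))
        * ∑ g ∈ Finset.univ.erase (grp i), (lam (grp i) g - lam g (grp i))) := by
      simp_rw [hl']
      rw [Finset.sum_ite_mem, Finset.univ_inter]
    rw [h1, Finset.sum_sub_distrib, Finset.sum_sub_distrib, Finset.sum_const, hk,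
      nsmul_eq_mul, Finset.sum_div]
    congr 1
    rw [← Finset.sum_fiberwise S grp (fun i => (p i / nRel (grp i))
        * ∑ g ∈ Finset.univ.erase (grp i), (lam (grp i) g - lam g (grp i)))]
    refine Finset.sum_congr rfl (fun A _ => ?_)
    rw [hSsel, Finset.sum_mul]
    refine Finset.sum_congr rfl (fun i hi => ?_)
    have hgi : grp i = A := (Finset.mem_filter.mp hi).2
    rw [hgi]
  -- part 1
  have part1 : gd - f = (1 / 2) * ∑ A, ∑ B ∈ Finset.univ.erase A,
      (δ * (lam A B + lam B A) - (Ssel A - Ssel B) * (lam A B - lam B A)) := by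
    rw [hgd, hf, hsuml']
    have := sym_id lam Ssel δ
    linarith [this]
  refine ⟨part1, fun hbound => ?_⟩
  -- part 2
  rw [part1]
  have hterm : ∀ A : Γ, ∀ B ∈ Finset.univ.erase A,
      δ * (lam A B + lam B A) - (Ssel A - Ssel B) * (lam A B - lam B A)
      ≤ (2 * δ / (((G : ℝ) - 1) * N)) * (|pg A - pg B| / (q A + q B)) := by
    intro A B hB
    have hne : A ≠ B := (Finset.mem_erase.mp hB).1.symm
    have hb := hbound A B hne
    have habs : |lam A B - lam B A| ≤ lam A B + lam B A := by
      have h1 := hlnn A B; have h2 := hlnn B A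
      rw [abs_le]; constructor <;> linarith
    have h1 : |(Ssel A - Ssel B) * (lam A B - lam B A)| ≤ δ * (lam A B + lam B A) := by
      rw [abs_mul]
      exact mul_le_mul hb habs (abs_nonneg _) hδ
    have h3 : 2 * δ * (lam A B + lam B A)
        = (2 * δ / (((G : ℝ) - 1) * N)) * (|pg A - pg B| / (q A + q B)) := by
      rw [hsumlam A B]
      field_simp
    nlinarith [neg_abs_le ((Ssel A - Ssel B) * (lam A B - lam B A)), h1]
  have hsum_le : ∑ A, ∑ B ∈ Finset.univ.erase A,
      (δ * (lam A B + lam B A) - (Ssel A - Ssel B) * (lam A B - lam B A))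
      ≤ ∑ A, ∑ B ∈ Finset.univ.erase A,
        (2 * δ / (((G : ℝ) - 1) * N)) * (|pg A - pg B| / (q A + q B)) :=
    Finset.sum_le_sum (fun A _ => Finset.sum_le_sum (hterm A))
  have hrw : ∑ A, ∑ B ∈ Finset.univ.erase A,
      (2 * δ / (((G : ℝ) - 1) * N)) * (|pg A - pg B| / (q A + q B))
      = (2 * δ / (((G : ℝ) - 1) * N)) * ∑ A, ∑ B ∈ Finset.univ.erase A,
          (|pg A - pg B| / (q A + q B)) := by
    simp_rw [← Finset.mul_sum]
  rw [hrw] at hsum_le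
  nlinarith [hsum_le]
end
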